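/- Let θ0 ∈ (0,1), λ > 0, and ε0 ∈ (0,1) be reals with λ·θ0^{ε0} ≤ 1/4. Then ∫_{λθ0}^{1/4} cos(2πy)/y dy ≥ (1 − ε0)·|log θ0|·cos(2πλ·θ0^{ε0}). -/
import Mathlib


open Real

/-- Key lower bound (9.3) in the proof of Lemma D.2. -/
theorem stmt14 (θ0 : ℝ) (hθ0 : θ0 ∈ Set.Ioo (0 : ℝ) 1) (lam : ℝ) (hlam : 0 < lam)
    (ε0 : ℝ) (hε0 : ε0 ∈ Set.Ioo (0 : ℝ) 1) (hsmall : lam * θ0 ^ ε0 ≤ 1 / 4) :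
    (∫ y in (lam * θ0)..(1 / 4), Real.cos (2 * Real.pi * y) / y)
      ≥ (1 - ε0) * |Real.log θ0| * Real.cos (2 * Real.pi * lam * θ0 ^ ε0) := by
  obtain ⟨hθ0p, hθ01⟩ := hθ0
  obtain ⟨hε0p, hε01⟩ := hε0
  set a := lam * θ0 with ha
  set c := lam * θ0 ^ ε0 with hc
  have hθpow : θ0 ≤ θ0 ^ ε0 := by
    calc θ0 = θ0 ^ (1 : ℝ) := (Real.rpow_one θ0).symm
    _ ≤ θ0 ^ ε0 := Real.rpow_le_rpow_of_exponent_ge hθ0p hθ01.le hε01.le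
  have hap : 0 < a := mul_pos hlam hθ0p
  have hcp : 0 < c := mul_pos hlam (Real.rpow_pos_of_pos hθ0p ε0)
  have hac : a ≤ c := mul_le_mul_of_nonneg_left hθpow hlam.le
  have hc4 : c ≤ 1 / 4 := hsmall
  have ha4 : a ≤ 1 / 4 := hac.trans hc4
  have hpos_uIcc : ∀ p q y : ℝ, 0 < p → 0 < q → y ∈ Set.uIcc p q → 0 < y := by
    intro p q y hp hq hy
    have h1 : min p q ≤ y := hy.1
    exact lt_of_lt_of_le (lt_min hp hq) h1
  have hcontOn : ∀ p q : ℝ, 0 < p → 0 < q →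
      IntervalIntegrable (fun y => Real.cos (2 * Real.pi * y) / y) MeasureTheory.volume p q := by
    intro p q hp hq
    apply ContinuousOn.intervalIntegrable
    apply ContinuousOn.div
    · exact (Real.continuous_cos.comp (continuous_const.mul continuous_id)).continuousOn
    · exact continuousOn_id
    · exact fun y hy => ne_of_gt (hpos_uIcc p q y hp hq hy)
  have hsplit : (∫ y in a..(1/4), Real.cos (2 * Real.pi * y) / y)
      = (∫ y in a..c, Real.cos (2 * Real.pi * y) / y)
        + ∫ y in c..(1/4), Real.cos (2 * Real.pi * y) / y :=
    (intervalIntegral.integral_add_adjacent_intervals (hcontOn a c hap hcp)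
      (hcontOn c (1/4) hcp (by norm_num))).symm
  have hcos_nonneg : ∀ y : ℝ, 0 ≤ y → y ≤ 1/4 → 0 ≤ Real.cos (2 * Real.pi * y) := by
    intro y hy0 hy4
    apply Real.cos_nonneg_of_mem_Icc
    constructor
    · nlinarith [Real.pi_pos]
    · nlinarith [Real.pi_pos]
  have h2 : 0 ≤ ∫ y in c..(1/4), Real.cos (2 * Real.pi * y) / y := by
    apply intervalIntegral.integral_nonneg hc4
    intro y hy
    have hy0 : 0 < y := lt_of_lt_of_le hcp hy.1
    exact div_nonneg (hcos_nonneg y hy0.le hy.2) hy0.le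
  have hcosc : 0 ≤ Real.cos (2 * Real.pi * c) := hcos_nonneg c hcp.le hc4
  have heq : (∫ y in a..c, Real.cos (2 * Real.pi * c) / y)
      = Real.cos (2 * Real.pi * c) * Real.log (c / a) := by
    simp_rw [div_eq_mul_inv, intervalIntegral.integral_const_mul]
    rw [integral_inv (fun h => absurd (hpos_uIcc a c 0 hap hcp h) (lt_irrefl 0)),
      div_eq_mul_inv]
  have hintc : IntervalIntegrable (fun y : ℝ => Real.cos (2 * Real.pi * c) / y)
      MeasureTheory.volume a c := by
    apply ContinuousOn.intervalIntegrable
    apply ContinuousOn.div continuousOn_const continuousOn_id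
    exact fun y hy => ne_of_gt (hpos_uIcc a c y hap hcp hy)
  have h1 : (∫ y in a..c, Real.cos (2 * Real.pi * y) / y)
      ≥ Real.cos (2 * Real.pi * c) * Real.log (c / a) := by
    rw [← heq]
    apply intervalIntegral.integral_mono_on hac hintc (hcontOn a c hap hcp)
    intro y hy
    have hy0 : 0 < y := lt_of_lt_of_le hap hy.1
    have hcc : Real.cos (2 * Real.pi * c) ≤ Real.cos (2 * Real.pi * y) := by
      apply Real.cos_le_cos_of_nonneg_of_le_pi
      · positivity
      · nlinarith [Real.pi_pos, hy.2.trans hc4]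
      · nlinarith [Real.pi_pos, hy.2]
    exact div_le_div_of_nonneg_right hcc hy0.le |> id
  have hca : c / a = θ0 ^ (ε0 - 1) := by
    rw [hc, ha, mul_div_mul_left _ _ (ne_of_gt hlam), Real.rpow_sub hθ0p, Real.rpow_one]
  have hlogca : Real.log (c / a) = (ε0 - 1) * Real.log θ0 := by
    rw [hca, Real.log_rpow hθ0p]
  have hlogθ : Real.log θ0 < 0 := Real.log_neg hθ0p hθ01
  have habs : |Real.log θ0| = -Real.log θ0 := abs_of_neg hlogθ
  have hcoseq : Real.cos (2 * Real.pi * lam * θ0 ^ ε0) = Real.cos (2 * Real.pi * c) := by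
    rw [hc]; ring_nf
  rw [hsplit, hcoseq, habs]
  nlinarith [h1, h2, hcosc, hlogca]
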